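/- arXiv:math/0101076 — 3 statements merged into one kernel-verified Lean document; each statement's English description precedes it below -/
import Mathlib

section
/- For every n ≥ d ≥ 2, the graph of the multiplex M^{d,n} contains a Hamiltonian cycle. -/
/-- Half of the adjacency relation of the graph of the multiplex `M^{d,n}`
(on vertex indices, with `a < b`): `b - a ≤ d - 2`, or `b = a + d`, or
`{a,b} = {0, d-1}`, or `{a,b} = {n-d+1, n}`. -/
def mAdj (d n a b : ℕ) : Prop :=
  a < b ∧ (b - a ≤ d - 2 ∨ b = a + d ∨ (a = 0 ∧ b = d - 1) ∨ (a = n - d + 1 ∧ b = n))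

/-- The graph of the multiplex `M^{d,n}`, on the vertices `x_0, …, x_n`. -/
def multiplexGraph (d n : ℕ) : SimpleGraph (Fin (n + 1)) where
  Adj a b := mAdj d n a.val b.val ∨ mAdj d n b.val a.val
  symm := ⟨by intro a b h; tauto⟩
  loopless := ⟨by
    intro a h
    rcases h with h | h <;> exact absurd h.1 (lt_irrefl _)⟩

namespace MHam

open List SimpleGraph

variable {V : Type*} {G : SimpleGraph V}

def mkWalk (G : SimpleGraph V) : (a : V) → (l : List V) → (b : V) →
    List.Chain G.Adj a (l ++ [b]) → G.Walk a b
  | _, [], _, h => Walk.cons (List.chain_cons.mp h).1 Walk.nil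
  | a, c :: l, b, h =>
    Walk.cons (List.chain_cons.mp h).1 (mkWalk G c l b (List.chain_cons.mp h).2)

theorem mkWalk_support (G : SimpleGraph V) : ∀ (a : V) (l : List V) (b : V) (h),
    (mkWalk G a l b h).support = a :: (l ++ [b])
  | _, [], _, _ => rfl
  | a, c :: l, b, h => by
    simp only [mkWalk, Walk.support_cons, mkWalk_support G c l b]
    exact congrArg (a :: ·) (mkWalk_support G c l b _)

theorem head?_tail_of_start_edge {v u x : V} (q : G.Walk v u) (hn : q.support.Nodup)
    (hx : s(v, x) ∈ q.edges) : q.support.tail.head? = some x := by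
  cases q with
  | nil => simp at hx
  | @cons _ b _ h r =>
    rw [Walk.support_cons] at hn ⊢
    have hvr : v ∉ r.support := (List.nodup_cons.mp hn).1
    simp only [List.tail_cons]
    rw [Walk.edges_cons] at hx
    rcases List.mem_cons.mp hx with h1 | h1
    · have hxb : x = b := by
        rcases Sym2.eq_iff.mp h1 with ⟨-, rfl⟩ | ⟨hvb, rfl⟩
        · rfl
        · exact absurd (hvb ▸ r.start_mem_support) hvr
      rw [r.support_eq_cons, hxb]
      rfl
    · exact absurd (r.fst_mem_support_of_mem_edges h1) hvr

theorem chain_imp_mem {α : Type*} {R S : α → α → Prop} {P : α → Prop}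
    (himp : ∀ x y, P x → P y → R x y → S x y) :
    ∀ {a : α} {l : List α}, List.Chain R a l → (∀ x ∈ a :: l, P x) → List.Chain S a l := by
  intro a l h
  induction l generalizing a with
  | nil => intro _; exact List.Chain.nil
  | cons b l ih =>
    intro hm
    obtain ⟨hr, h⟩ := List.chain_cons.mp h
    exact List.Chain.cons
      (himp _ _ (hm a (by simp)) (hm b (by simp)) hr)
      (ih h (fun x hx => hm x (List.mem_cons_of_mem _ hx)))

open Fin.NatCast in
theorem ham_of_list (d n : ℕ) (hn : 2 ≤ n) (M : List ℕ)
    (hchain : List.Chain (fun a b => mAdj d n a b ∨ mAdj d n b a) 0 (M ++ [0]))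
    (hle : ∀ x ∈ (0 : ℕ) :: M, x ≤ n)
    (hnd : ((0 : ℕ) :: M).Nodup)
    (hlen : M.length = n) :
    ∃ (v : Fin (n + 1)) (w : (multiplexGraph d n).Walk v v), w.IsHamiltonianCycle := by
  classical
  obtain ⟨m, M', rfl⟩ : ∃ m M', M = m :: M' := by
    cases M with
    | nil => simp at hlen; omega
    | cons m M' => exact ⟨m, M', rfl⟩
  obtain ⟨m₂, M₂, rfl⟩ : ∃ m₂ M₂, M' = m₂ :: M₂ := by
    cases M' with
    | nil => simp at hlen; omega
    | cons m₂ M₂ => exact ⟨m₂, M₂, rfl⟩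
  set c : ℕ → Fin (n + 1) := fun x => (x : Fin (n + 1)) with hcdef
  have hc : ∀ x, x ≤ n → (c x).val = x := fun x hx => Fin.val_cast_of_lt (by omega)
  have hcinj : ∀ x y, x ≤ n → y ≤ n → c x = c y → x = y := by
    intro x y hx hy hxy
    have := congrArg Fin.val hxy
    rwa [hc x hx, hc y hy] at this
  -- chain over Fin
  have hle' : ∀ x ∈ (0 : ℕ) :: ((m :: m₂ :: M₂) ++ [0]), x ≤ n := by
    intro x hx
    rcases List.mem_cons.mp hx with rfl | hx
    · omega
    · rcases List.mem_append.mp hx with hx | hx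
      · exact hle x (List.mem_cons_of_mem _ hx)
      · simp at hx; omega
  have hadj : ∀ x y, x ≤ n → y ≤ n → (mAdj d n x y ∨ mAdj d n y x) →
      (multiplexGraph d n).Adj (c x) (c y) := by
    intro x y hx hy h
    show mAdj d n (c x).val (c y).val ∨ mAdj d n (c y).val (c x).val
    rw [hc x hx, hc y hy]; exact h
  have hchain2 : List.Chain (multiplexGraph d n).Adj (c 0)
      (List.map c ((m :: m₂ :: M₂) ++ [0])) :=
    (List.isChain_map c (l := 0 :: (m :: m₂ :: M₂ ++ [0]))).mpr (chain_imp_mem hadj hchain hle')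
  have hc0 : c 0 = 0 := by simp [hcdef]
  rw [hc0] at hchain2
  simp only [List.map_append, List.map_cons, List.map_nil, hc0] at hchain2
  -- hchain2 : Chain Adj 0 ((c m :: c m₂ :: map c M₂) ++ [0])
  rw [List.cons_append, List.Chain, List.chain_cons] at hchain2
  obtain ⟨h1, h2⟩ := hchain2
  set L : List (Fin (n + 1)) := c m :: c m₂ :: List.map c M₂ with hLdef
  have hL : L = List.map c (m :: m₂ :: M₂) := by simp [hLdef]
  set p : (multiplexGraph d n).Walk (c m) 0 :=
    mkWalk _ (c m) (c m₂ :: List.map c M₂) 0 (by exact h2) with hpdef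
  have hsupp : p.support = L ++ [0] := by
    have := mkWalk_support (multiplexGraph d n) (c m) (c m₂ :: List.map c M₂) 0 h2; rw [hpdef, this]; simp [hLdef]
  -- nodups
  have h0L : ((0 : Fin (n+1)) :: L).Nodup := by
    have : List.map c ((0 : ℕ) :: m :: m₂ :: M₂) = (0 : Fin (n+1)) :: L := by
      simp [hL, hc0]
    rw [← this]
    exact hnd.map_on (fun x hx y hy => hcinj x y (hle x hx) (hle y hy))
  have hLnd : L.Nodup := (List.nodup_cons.mp h0L).2
  have h0notL : (0 : Fin (n+1)) ∉ L := (List.nodup_cons.mp h0L).1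
  have hsuppnd : (L ++ [0]).Nodup := by
    rw [List.nodup_append]
    refine ⟨hLnd, List.nodup_singleton _, ?_⟩
    intro x hx y hy hxy
    simp only [List.mem_singleton] at hy
    subst hy; subst hxy; exact h0notL hx
  have hpath : p.IsPath := Walk.IsPath.mk' (by rw [hsupp]; exact hsuppnd)
  have hne : s((0 : Fin (n+1)), c m) ∉ p.edges := by
    intro hmem
    have hqn : p.reverse.support.Nodup := by
      rw [Walk.support_reverse]; exact hsupp ▸ (List.nodup_reverse.mpr hsuppnd)
    have hqe : s((0 : Fin (n+1)), c m) ∈ p.reverse.edges := by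
      rw [Walk.edges_reverse, List.mem_reverse]; exact hmem
    have key := head?_tail_of_start_edge p.reverse hqn hqe
    rw [Walk.support_reverse, hsupp] at key
    simp only [List.reverse_append, List.reverse_cons, List.reverse_nil, List.nil_append,
      List.cons_append, List.tail_cons, List.nil_append] at key
    -- key : (L.reverse).head? = some (c m)
    rw [List.head?_reverse] at key
    have hgl : L.getLast? = (c m₂ :: List.map c M₂).getLast? := by
      rw [hLdef]; exact List.getLast?_cons_cons
    rw [hgl] at key
    exact (List.nodup_cons.mp hLnd).1 (List.mem_of_getLast? key)
  set w : (multiplexGraph d n).Walk 0 0 := Walk.cons h1 p with hwdef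
  have hcyc : w.IsCycle := (Walk.cons_isCycle_iff p h1).mpr ⟨hpath, hne⟩
  refine ⟨0, w, ?_⟩
  rw [SimpleGraph.Walk.isHamiltonianCycle_iff_isCycle_and_support_count_tail_eq_one]
  refine ⟨hcyc, ?_⟩
  have htail : w.support.tail = L ++ [0] := by
    rw [hwdef, Walk.support_cons, List.tail_cons, hsupp]
  -- coverage
  have hlenL : ((0 : Fin (n+1)) :: L).length = n + 1 := by
    have : L.length = n := by
      have := congrArg List.length hL
      simp only [List.length_map] at this
      rw [this, hlen]
    simp [this]
  have hcov : ∀ x : Fin (n + 1), x ∈ (0 : Fin (n+1)) :: L := by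
    have huniv : ((0 : Fin (n+1)) :: L).toFinset = Finset.univ := by
      apply Finset.eq_univ_of_card
      rw [List.toFinset_card_of_nodup h0L, hlenL, Fintype.card_fin]
    intro x
    rw [← List.mem_toFinset, huniv]
    exact Finset.mem_univ x
  intro a
  rw [htail, List.count_append]
  by_cases ha : a = 0
  · subst ha
    rw [List.count_eq_zero_of_not_mem h0notL]
    simp
  · have haL : a ∈ L := by
      rcases List.mem_cons.mp (hcov a) with h | h
      · exact absurd h ha
      · exact h
    rw [List.count_eq_one_of_mem hLnd haL]
    simp [ha, Ne.symm ha, List.count_singleton]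

theorem chain'_map_range {R : ℕ → ℕ → Prop} (f : ℕ → ℕ) :
    ∀ (k : ℕ), (∀ i, i + 1 < k → R (f i) (f (i + 1))) →
      List.Chain' R ((List.range k).map f)
  | 0, _ => by simp [List.Chain']
  | (k+1), h => by
    rw [List.Chain', List.isChain_map, List.isChain_range_succ]
    intro m hm
    exact h m (by omega)

theorem getLast?_map_range (f : ℕ → ℕ) (k : ℕ) :
    ((List.range (k+1)).map f).getLast? = some (f k) := by
  rw [List.range_succ, List.map_append]
  simp

theorem head?_map_range (f : ℕ → ℕ) (k : ℕ) :
    ((List.range (k+1)).map f).head? = some (f 0) := by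
  rw [List.range_succ_eq_map]
  rfl

/-- The "up" sequence `0, 1, 4, 5, 8, 9, …` for the `d = 3` case. -/
def d3u (j : ℕ) : ℕ := 2 * j - j % 2

/-- The "down" sequence `2, 3, 6, 7, 10, 11, …` for the `d = 3` case. -/
def d3w (j : ℕ) : ℕ := 2 * j + 2 - j % 2

theorem parity_case (d n e o : ℕ) (hd : 2 ≤ d) (hd3 : d ≠ 3) (hdn : d ≤ n)
    (he : n / 2 = e + 1) (ho : (n + 1) / 2 = o + 1) :
    ∃ (v : Fin (n + 1)) (w : (multiplexGraph d n).Walk v v), w.IsHamiltonianCycle := by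
  have hn : 2 ≤ n := hd.trans hdn
  set up1 : List ℕ := (List.range (e+1)).map (fun i => 2*i + 2) with hup1
  set down : List ℕ := (List.range (o+1)).map (fun i => 2*i + 1) with hdown
  have hsplit : (List.range (e+2)).map (fun i => 2*i) = 0 :: up1 := by
    rw [show e + 2 = (e+1) + 1 from rfl, List.range_succ_eq_map, List.map_cons, List.map_map]
    exact congrArg₂ List.cons rfl
      (List.map_congr_left (fun a _ => by simp only [Function.comp_apply]; omega))
  apply ham_of_list d n hn (up1 ++ down.reverse)
  · -- the chain condition
    have key : List.Chain' (fun a b => mAdj d n a b ∨ mAdj d n b a)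
        (((List.range (e+2)).map (fun i => 2*i)) ++ (down.reverse ++ [0])) := by
      rw [List.Chain', List.isChain_append]
      refine ⟨?_, ?_, ?_⟩
      · apply chain'_map_range
        intro i _
        exact Or.inl (by unfold mAdj; omega)
      · rw [List.isChain_append]
        refine ⟨?_, by simp, ?_⟩
        · rw [List.isChain_reverse]
          apply chain'_map_range
          intro i _
          exact Or.inr (by unfold mAdj; omega)
        · intro x hx y hy
          rw [hdown, List.getLast?_reverse] at hx
          simp only [List.head?_cons, Option.mem_def, Option.some.injEq] at hy
          rw [head?_map_range] at hx
          simp only [Option.mem_def, Option.some.injEq] at hx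
          subst hx; subst hy
          exact Or.inr (by unfold mAdj; omega)
      · intro x hx y hy
        rw [show e + 2 = (e+1)+1 from rfl, getLast?_map_range] at hx
        simp only [Option.mem_def, Option.some.injEq] at hx
        subst hx
        rw [List.head?_append, hdown, List.head?_reverse, getLast?_map_range] at hy
        simp only [List.head?_cons, Option.or_some, Option.mem_def, Option.some.injEq, Option.getD_some] at hy
        subst hy
        by_cases hpar : n % 2 = 0
        · exact Or.inr (by unfold mAdj; omega)
        · exact Or.inl (by unfold mAdj; omega)
    rw [hsplit] at key
    rw [List.append_assoc]
    exact key
  · -- bounds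
    intro x hx
    rcases List.mem_cons.mp hx with rfl | hx
    · omega
    rcases List.mem_append.mp hx with hx | hx
    · rw [hup1] at hx
      simp only [List.mem_map, List.mem_range] at hx
      obtain ⟨i, hi, rfl⟩ := hx
      omega
    · rw [hdown, List.mem_reverse] at hx
      simp only [List.mem_map, List.mem_range] at hx
      obtain ⟨i, hi, rfl⟩ := hx
      omega
  · -- nodup
    rw [List.nodup_cons]
    constructor
    · intro hx
      rcases List.mem_append.mp hx with hx | hx
      · rw [hup1] at hx
        simp only [List.mem_map, List.mem_range] at hx
        obtain ⟨i, _, hi⟩ := hx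
        omega
      · rw [hdown, List.mem_reverse] at hx
        simp only [List.mem_map, List.mem_range] at hx
        obtain ⟨i, _, hi⟩ := hx
        omega
    · refine List.Nodup.append ?_ ?_ ?_
      · exact List.Nodup.map (fun a b hab => by omega) (List.nodup_range)
      · exact List.nodup_reverse.mpr
          (List.Nodup.map (fun a b hab => by omega) (List.nodup_range))
      · intro a ha hb
        rw [hup1] at ha
        rw [hdown, List.mem_reverse] at hb
        simp only [List.mem_map, List.mem_range] at ha hb
        obtain ⟨i, _, rfl⟩ := ha
        obtain ⟨j, _, hj⟩ := hb
        omega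
  · -- length
    simp only [List.length_append, List.length_reverse, hup1, hdown, List.length_map,
      List.length_range]
    omega

theorem d3_case (n A' B' : ℕ) (hn : 3 ≤ n) (hA : 1 ≤ A')
    (hAB : A' + B' + 2 = n + 1)
    (huA : d3u A' ≤ n) (hwB : d3w B' ≤ n)
    (hj : mAdj 3 n (d3u A') (d3w B') ∨ mAdj 3 n (d3w B') (d3u A')) :
    ∃ (v : Fin (n + 1)) (w : (multiplexGraph 3 n).Walk v v), w.IsHamiltonianCycle := by
  set up1 : List ℕ := (List.range A').map (fun j => d3u (j+1)) with hup1
  set down : List ℕ := (List.range (B'+1)).map d3w with hdown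
  have hsplit : (List.range (A'+1)).map d3u = 0 :: up1 := by
    rw [List.range_succ_eq_map, List.map_cons, List.map_map]
    rfl
  apply ham_of_list 3 n (by omega) (up1 ++ down.reverse)
  · have key : List.Chain' (fun a b => mAdj 3 n a b ∨ mAdj 3 n b a)
        (((List.range (A'+1)).map d3u) ++ (down.reverse ++ [0])) := by
      rw [List.Chain', List.isChain_append]
      refine ⟨?_, ?_, ?_⟩
      · apply chain'_map_range
        intro i _
        exact Or.inl (by unfold mAdj d3u; omega)
      · rw [List.isChain_append]
        refine ⟨?_, by simp, ?_⟩
        · rw [List.isChain_reverse]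
          apply chain'_map_range
          intro i _
          exact Or.inr (by unfold mAdj d3w; omega)
        · intro x hx y hy
          rw [hdown, List.getLast?_reverse] at hx
          simp only [List.head?_cons, Option.mem_def, Option.some.injEq] at hy
          rw [head?_map_range] at hx
          simp only [Option.mem_def, Option.some.injEq] at hx
          subst hx; subst hy
          exact Or.inr (by unfold mAdj d3w; omega)
      · intro x hx y hy
        rw [getLast?_map_range] at hx
        simp only [Option.mem_def, Option.some.injEq] at hx
        subst hx
        rw [List.head?_append, hdown, List.head?_reverse, getLast?_map_range] at hy
        simp only [List.head?_cons, Option.or_some, Option.mem_def, Option.some.injEq] at hy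
        subst hy
        exact hj
    rw [hsplit] at key
    rw [List.append_assoc]
    exact key
  · intro x hx
    rcases List.mem_cons.mp hx with rfl | hx
    · omega
    rcases List.mem_append.mp hx with hx | hx
    · rw [hup1] at hx
      simp only [List.mem_map, List.mem_range] at hx
      obtain ⟨i, hi, rfl⟩ := hx
      simp only [d3u] at huA ⊢
      omega
    · rw [hdown, List.mem_reverse] at hx
      simp only [List.mem_map, List.mem_range] at hx
      obtain ⟨i, hi, rfl⟩ := hx
      simp only [d3w] at hwB ⊢
      omega
  · rw [List.nodup_cons]
    constructor
    · intro hx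
      rcases List.mem_append.mp hx with hx | hx
      · rw [hup1] at hx
        simp only [List.mem_map, List.mem_range] at hx
        obtain ⟨i, _, hi⟩ := hx
        simp only [d3u] at hi
        omega
      · rw [hdown, List.mem_reverse] at hx
        simp only [List.mem_map, List.mem_range] at hx
        obtain ⟨i, _, hi⟩ := hx
        simp only [d3w] at hi
        omega
    · refine List.Nodup.append ?_ ?_ ?_
      · exact List.Nodup.map (fun a b hab => by simp only [d3u] at hab; omega)
          (List.nodup_range)
      · exact List.nodup_reverse.mpr
          (List.Nodup.map (fun a b hab => by simp only [d3w] at hab; omega)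
            (List.nodup_range))
      · intro a ha hb
        rw [hup1] at ha
        rw [hdown, List.mem_reverse] at hb
        simp only [List.mem_map, List.mem_range] at ha hb
        obtain ⟨i, _, rfl⟩ := ha
        obtain ⟨j, _, hj⟩ := hb
        simp only [d3u, d3w] at hj
        omega
  · simp only [List.length_append, List.length_reverse, hup1, hdown, List.length_map,
      List.length_range]
    omega

end MHam

/-- For every `n ≥ d ≥ 2`, the graph of the multiplex `M^{d,n}` contains a
Hamiltonian cycle. -/
theorem multiplex_hamiltonian (d n : ℕ) (hd : 2 ≤ d) (hdn : d ≤ n) :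
    ∃ (v : Fin (n + 1)) (w : (multiplexGraph d n).Walk v v),
      w.IsHamiltonianCycle := by
  have hn : 2 ≤ n := hd.trans hdn
  by_cases hd3 : d = 3
  · subst hd3
    have hn3 : 3 ≤ n := hdn
    have h4 : n % 4 = 0 ∨ n % 4 = 1 ∨ n % 4 = 2 ∨ n % 4 = 3 := by omega
    rcases h4 with h | h | h | h
    · exact MHam.d3_case n (2*(n/4)) (2*(n/4) - 1) hn3 (by omega) (by omega)
        (by unfold MHam.d3u; omega) (by unfold MHam.d3w; omega)
        (by unfold mAdj MHam.d3u MHam.d3w; omega)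
    · exact MHam.d3_case n (2*(n/4) + 1) (2*(n/4) - 1) hn3 (by omega) (by omega)
        (by unfold MHam.d3u; omega) (by unfold MHam.d3w; omega)
        (by unfold mAdj MHam.d3u MHam.d3w; omega)
    · exact MHam.d3_case n (2*(n/4) + 1) (2*(n/4)) hn3 (by omega) (by omega)
        (by unfold MHam.d3u; omega) (by unfold MHam.d3w; omega)
        (by unfold mAdj MHam.d3u MHam.d3w; omega)
    · exact MHam.d3_case n (2*(n/4) + 1) (2*(n/4) + 1) hn3 (by omega) (by omega)
        (by unfold MHam.d3u; omega) (by unfold MHam.d3w; omega)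
        (by unfold mAdj MHam.d3u MHam.d3w; omega)
  · exact MHam.parity_case d n (n/2 - 1) ((n+1)/2 - 1) hd hd3 hdn (by omega) (by omega)
end

section
/- For every n ≥ d ≥ 2, the diameter of the graph of the multiplex M^{d,n} is ⌈n/d⌉. -/
open SimpleGraph

section Aux
variable {d n : ℕ}

lemma mg_adj_bound (hdn : d ≤ n) {a b : ℕ} (h : mAdj d n a b) : a < b ∧ b ≤ a + d := by
  obtain ⟨h1, h2⟩ := h
  exact ⟨h1, by omega⟩

lemma mg_walk_bound (hdn : d ≤ n) {u v : Fin (n+1)} (p : (multiplexGraph d n).Walk u v) :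
    v.val ≤ u.val + d * p.length := by
  induction p with
  | nil => simp
  | @cons u w v h p ih =>
    rcases (show mAdj d n u.val w.val ∨ mAdj d n w.val u.val from h) with h | h <;>
    · have := mg_adj_bound hdn h
      simp only [Walk.length_cons, Nat.mul_succ]
      omega

lemma mg_edist_adj {u v : Fin (n+1)} (h : mAdj d n u.val v.val) :
    (multiplexGraph d n).edist u v ≤ 1 :=
  (edist_eq_one_iff_adj.mpr (Or.inl h)).le

/-- short-step upper bound (allowing equality). -/
lemma mg_short {u v : Fin (n+1)} (hle : u.val ≤ v.val) (h : v.val - u.val ≤ d - 2) :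
    (multiplexGraph d n).edist u v ≤ 1 := by
  rcases eq_or_lt_of_le hle with heq | hlt
  · have : u = v := Fin.ext heq
    simp [this]
  · exact mg_edist_adj ⟨hlt, Or.inl h⟩

/-- jump chains -/
lemma mg_jumps (hd : 1 ≤ d) : ∀ (k : ℕ) (u v : Fin (n+1)), v.val = u.val + k * d →
    (multiplexGraph d n).edist u v ≤ k := by
  intro k
  induction k with
  | zero =>
    intro u v h
    have : u = v := Fin.ext (by omega)
    simp [this]
  | succ k ih =>
    intro u v h
    have hvlt := v.isLt
    have hkd : (k + 1) * d = k * d + d := Nat.succ_mul k d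
    have hw : u.val + k * d ≤ n := by omega
    set w : Fin (n+1) := ⟨u.val + k * d, by omega⟩ with hwdef
    have h1 : (multiplexGraph d n).edist u w ≤ k := ih u w rfl
    have h2 : (multiplexGraph d n).edist w v ≤ 1 :=
      mg_edist_adj ⟨by simp only [hwdef]; omega, Or.inr (Or.inl (by simp only [hwdef]; omega))⟩
    calc (multiplexGraph d n).edist u v
        ≤ (multiplexGraph d n).edist u w + (multiplexGraph d n).edist w v :=
          SimpleGraph.edist_triangle
      _ ≤ (k : ℕ∞) + 1 := add_le_add h1 h2
      _ = ((k + 1 : ℕ) : ℕ∞) := by push_cast; ring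

lemma mg_jumps' (hd : 1 ≤ d) (k : ℕ) (u v : Fin (n+1)) (h : u.val = v.val + k * d) :
    (multiplexGraph d n).edist u v ≤ k := by
  rw [SimpleGraph.edist_comm]
  exact mg_jumps hd k v u h


lemma mg_edist_adj' {u v : Fin (n+1)} (h : mAdj d n v.val u.val) :
    (multiplexGraph d n).edist u v ≤ 1 :=
  (edist_eq_one_iff_adj.mpr (Or.inr h)).le

lemma mg_chain2 {u w v : Fin (n+1)} {a b : ℕ}
    (h1 : (multiplexGraph d n).edist u w ≤ a) (h2 : (multiplexGraph d n).edist w v ≤ b) :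
    (multiplexGraph d n).edist u v ≤ ((a + b : ℕ) : ℕ∞) := by
  calc (multiplexGraph d n).edist u v
      ≤ (multiplexGraph d n).edist u w + (multiplexGraph d n).edist w v :=
        SimpleGraph.edist_triangle
    _ ≤ (a : ℕ∞) + b := add_le_add h1 h2
    _ = ((a + b : ℕ) : ℕ∞) := by push_cast; ring

lemma mg_chain3 {u w1 w2 v : Fin (n+1)} {a b c : ℕ}
    (h1 : (multiplexGraph d n).edist u w1 ≤ a) (h2 : (multiplexGraph d n).edist w1 w2 ≤ b)
    (h3 : (multiplexGraph d n).edist w2 v ≤ c) :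
    (multiplexGraph d n).edist u v ≤ ((a + b + c : ℕ) : ℕ∞) :=
  mg_chain2 (mg_chain2 h1 h2) h3

lemma mg_budget (hd : 0 < d) (m : ℕ) (h : m * d + 1 ≤ n) : m + 1 ≤ (n + d - 1) / d := by
  rw [Nat.le_div_iff_mul_le hd, Nat.add_mul, one_mul]
  omega

lemma mg_ub (hd : 2 ≤ d) (hdn : d ≤ n) (u v : Fin (n+1)) (hle : u.val ≤ v.val) :
    (multiplexGraph d n).edist u v ≤ (((n + d - 1) / d : ℕ) : ℕ∞) := by
  have hdpos : 0 < d := by omega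
  set D := (n + d - 1) / d with hD
  set g := v.val - u.val with hgdef
  set k := g / d with hk
  set r := g % d with hr
  have hgd : g = k * d + r := by rw [hk, hr, Nat.mul_comm]; exact (Nat.div_add_mod g d).symm
  have hrd : r < d := Nat.mod_lt _ hdpos
  have hvval : v.val = u.val + g := by omega
  have hvn : v.val ≤ n := by omega
  have hun : u.val ≤ n := by omega
  -- r = 0 case
  by_cases hr0 : r = 0
  · have h1 : (multiplexGraph d n).edist u v ≤ k := mg_jumps (by omega) k u v (by omega)
    refine h1.trans (Nat.cast_le.mpr ?_)
    rw [hD, Nat.le_div_iff_mul_le hdpos]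
    omega
  by_cases hr1 : r ≤ d - 2
  · -- one short step after jumps
    have hwle : u.val + k * d ≤ n := by omega
    set w : Fin (n+1) := ⟨u.val + k * d, by omega⟩ with hw
    have h1 : (multiplexGraph d n).edist u w ≤ k :=
      mg_jumps (by omega) k u w rfl
    have h2 : (multiplexGraph d n).edist w v ≤ 1 :=
      mg_short (by simp only [hw]; omega) (by simp only [hw]; omega)
    refine (mg_chain2 h1 h2).trans (Nat.cast_le.mpr (mg_budget hdpos k (by omega)))
  -- now r = d - 1
  have hrd1 : r = d - 1 := by omega
  have hbud : k + 1 ≤ D := mg_budget hdpos k (by omega)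
  by_cases hu0 : u.val = 0
  · -- special edge {0, d-1} then jumps
    set w : Fin (n+1) := ⟨d - 1, by omega⟩ with hw
    have h1 : (multiplexGraph d n).edist u w ≤ 1 :=
      mg_edist_adj ⟨by simp only [hw]; omega, Or.inr (Or.inr (Or.inl ⟨hu0, by simp [hw]⟩))⟩
    have h2 : (multiplexGraph d n).edist w v ≤ k :=
      mg_jumps (by omega) k w v (by simp only [hw]; omega)
    exact (mg_chain2 h1 h2).trans (Nat.cast_le.mpr (by omega))
  by_cases hvn' : v.val = n
  · -- jumps then special edge {n-d+1, n}
    set w : Fin (n+1) := ⟨n - d + 1, by omega⟩ with hw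
    have h1 : (multiplexGraph d n).edist u w ≤ k :=
      mg_jumps (by omega) k u w (by simp only [hw]; omega)
    have h2 : (multiplexGraph d n).edist w v ≤ 1 :=
      mg_edist_adj ⟨by simp only [hw]; omega, Or.inr (Or.inr (Or.inr ⟨by simp [hw], hvn'⟩))⟩
    exact (mg_chain2 h1 h2).trans (Nat.cast_le.mpr (by omega))
  -- interior: 1 ≤ u.val, v.val ≤ n - 1, hence g ≤ n - 2
  have hgn2 : g + 2 ≤ n := by omega
  by_cases hd3 : 3 ≤ d
  · -- two short steps after the jumps
    have hsucc : (k + 1) * d = k * d + d := Nat.succ_mul k d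
    set w1 : Fin (n+1) := ⟨u.val + k * d, by omega⟩ with hw1
    set w2 : Fin (n+1) := ⟨u.val + k * d + (d - 2), by omega⟩ with hw2
    have h1 : (multiplexGraph d n).edist u w1 ≤ k :=
      mg_jumps (by omega) k u w1 rfl
    have h2 : (multiplexGraph d n).edist w1 w2 ≤ 1 :=
      mg_short (by simp only [hw1, hw2]; omega) (by simp only [hw1, hw2]; omega)
    have h3 : (multiplexGraph d n).edist w2 v ≤ 1 :=
      mg_short (by simp only [hw2]; omega) (by simp only [hw2]; omega)
    refine (mg_chain3 h1 h2 h3).trans (Nat.cast_le.mpr (mg_budget hdpos (k + 1) (by omega)))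
  -- d = 2
  have hd2 : d = 2 := by omega
  subst hd2
  have hpar : (v.val - u.val) % 2 = 1 := by omega
  by_cases hbot : u.val + v.val ≤ n
  · -- via the bottom special edge {0, 1}
    set a : Fin (n+1) := ⟨u.val % 2, by omega⟩ with ha
    set a' : Fin (n+1) := ⟨1 - u.val % 2, by omega⟩ with ha'
    have h1 : (multiplexGraph 2 n).edist u a ≤ ((u.val / 2 : ℕ) : ℕ∞) :=
      mg_jumps' (by omega) (u.val / 2) u a (by simp only [ha]; omega)
    have h2 : (multiplexGraph 2 n).edist a a' ≤ 1 := by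
      rcases Nat.mod_two_eq_zero_or_one u.val with h | h
      · exact mg_edist_adj ⟨by simp only [ha, ha']; omega,
          Or.inr (Or.inr (Or.inl ⟨by simp [ha, h], by simp [ha', h]⟩))⟩
      · exact mg_edist_adj' ⟨by simp only [ha, ha']; omega,
          Or.inr (Or.inr (Or.inl ⟨by simp [ha', h], by simp [ha, h]⟩))⟩
    have h3 : (multiplexGraph 2 n).edist a' v ≤ ((v.val / 2 : ℕ) : ℕ∞) :=
      mg_jumps (by omega) (v.val / 2) a' v (by simp only [ha']; omega)
    refine (mg_chain3 h1 h2 h3).trans (Nat.cast_le.mpr ?_)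
    rw [hD, Nat.le_div_iff_mul_le hdpos]
    omega
  · -- via the top special edge {n - 1, n}
    set e := (n - u.val) % 2 with he
    set a : Fin (n+1) := ⟨n - e, by omega⟩ with ha
    set a' : Fin (n+1) := ⟨n - (1 - e), by omega⟩ with ha'
    have h1 : (multiplexGraph 2 n).edist u a ≤ (((n - u.val) / 2 : ℕ) : ℕ∞) :=
      mg_jumps (by omega) ((n - u.val) / 2) u a (by simp only [ha]; omega)
    have h2 : (multiplexGraph 2 n).edist a a' ≤ 1 := by
      rcases Nat.mod_two_eq_zero_or_one (n - u.val) with h | h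
      · exact mg_edist_adj' ⟨by simp only [ha, ha']; omega,
          Or.inr (Or.inr (Or.inr ⟨by simp only [ha']; omega, by simp only [ha]; omega⟩))⟩
      · exact mg_edist_adj ⟨by simp only [ha, ha']; omega,
          Or.inr (Or.inr (Or.inr ⟨by simp only [ha]; omega, by simp only [ha']; omega⟩))⟩
    have h3 : (multiplexGraph 2 n).edist a' v ≤ (((n - (1 - e) - v.val) / 2 : ℕ) : ℕ∞) :=
      mg_jumps' (by omega) ((n - (1 - e) - v.val) / 2) a' v (by simp only [ha']; omega)
    refine (mg_chain3 h1 h2 h3).trans (Nat.cast_le.mpr ?_)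
    rw [hD, Nat.le_div_iff_mul_le hdpos]
    omega

end Aux


/-- For every `n ≥ d ≥ 2`, the diameter of the graph of the multiplex `M^{d,n}`
is `⌈n / d⌉`. -/
theorem multiplex_diameter (d n : ℕ) (hd : 2 ≤ d) (hdn : d ≤ n) :
    (multiplexGraph d n).diam = ⌈(n : ℚ) / (d : ℚ)⌉₊ := by
  have hdpos : 0 < d := by omega
  set D := (n + d - 1) / d with hD
  have hD1 : 1 ≤ D := by rw [hD, Nat.le_div_iff_mul_le hdpos]; omega
  have hmod : d * D + (n + d - 1) % d = n + d - 1 := by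
    rw [hD]; exact Nat.div_add_mod _ _
  have hmodlt : (n + d - 1) % d < d := Nat.mod_lt _ hdpos
  have hnDd : n ≤ D * d := by rw [Nat.mul_comm]; omega
  have hDdn : D * d ≤ n + d - 1 := by rw [Nat.mul_comm]; omega
  -- upper bound on the extended diameter
  have hub : (multiplexGraph d n).ediam ≤ (D : ℕ∞) := by
    apply ediam_le_of_edist_le
    intro u v
    rcases le_total u.val v.val with h | h
    · exact mg_ub hd hdn u v h
    · rw [SimpleGraph.edist_comm]; exact mg_ub hd hdn v u h
  -- lower bound: the distance from x_0 to x_n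
  set v0 : Fin (n+1) := ⟨0, by omega⟩ with hv0
  set vn : Fin (n+1) := ⟨n, by omega⟩ with hvn
  have hne : (multiplexGraph d n).edist v0 vn ≠ ⊤ :=
    ((mg_ub hd hdn v0 vn (by simp [hv0])).trans_lt (ENat.coe_lt_top _)).ne
  obtain ⟨p, hp⟩ := (reachable_of_edist_ne_top hne).exists_walk_length_eq_edist
  have hpl : n ≤ d * p.length := by
    have := mg_walk_bound hdn p
    simp only [hv0, hvn] at this
    omega
  have hDle : D ≤ p.length := by
    rw [hD, Nat.div_le_iff_le_mul_add_pred hdpos]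
    omega
  have hlow : (D : ℕ∞) ≤ (multiplexGraph d n).edist v0 vn := by
    rw [← hp]
    exact_mod_cast hDle
  have hediam : (multiplexGraph d n).ediam = (D : ℕ∞) :=
    le_antisymm hub (hlow.trans edist_le_ediam)
  have hdiam : (multiplexGraph d n).diam = D := by
    rw [SimpleGraph.diam, hediam, ENat.toNat_coe]
  rw [hdiam]
  symm
  rw [Nat.ceil_eq_iff (by omega : D ≠ 0)]
  have hdQ : (0 : ℚ) < d := by exact_mod_cast hdpos
  constructor
  · rw [lt_div_iff₀ hdQ]
    have hnat : (D - 1) * d < n := by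
      have h1 : (D - 1) * d = D * d - d := Nat.sub_one_mul D d
      have h2 : d ≤ D * d := Nat.le_mul_of_pos_left d (by omega)
      omega
    exact_mod_cast hnat
  · rw [div_le_iff₀ hdQ]
    exact_mod_cast hnDd
end

section
/- For n ≥ k ≥ d = 2m+1 ≥ 5, the chromatic number of the graph of the ordinary polytope P^{d,k,n} equals k if n > k, and k+1 if n = k. -/
/-- Half of the adjacency relation of the graph of the ordinary polytope
`P^{d,k,n}` (on vertex indices, with `a < b`): `b - a ≤ k - 2`, or `b = a + k`,
or `{a,b} = {0, k-1}`, or `{a,b} = {n-k+1, n}`. -/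
def oAdj (k n a b : ℕ) : Prop :=
  a < b ∧ (b - a ≤ k - 2 ∨ b = a + k ∨ (a = 0 ∧ b = k - 1) ∨ (a = n - k + 1 ∧ b = n))

/-- The graph of the ordinary polytope `P^{d,k,n}`, on the vertices `x_0, …, x_n`. -/
def ordinaryGraph (k n : ℕ) : SimpleGraph (Fin (n + 1)) where
  Adj a b := oAdj k n a.val b.val ∨ oAdj k n b.val a.val
  symm := ⟨by intro a b h; exact Or.symm h⟩
  loopless := ⟨by
    intro a h
    rcases h with h | h <;> exact absurd h.1 (lt_irrefl _)⟩

/-- The coloring function. -/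
def ocol (k n i : ℕ) : ℕ := if i = 0 ∨ i = n then k - 1 else i % (k - 1)

lemma ocol_lt (k n i : ℕ) (hk : 5 ≤ k) : ocol k n i < k := by
  unfold ocol
  split
  · omega
  · have := Nat.mod_lt i (show 0 < k - 1 by omega); omega

lemma ocol_ne (k n a b : ℕ) (hk : 5 ≤ k) (hn : k < n) (hb : b ≤ n)
    (h : oAdj k n a b) : ocol k n a ≠ ocol k n b := by
  have hk1 : 0 < k - 1 := by omega
  have key : ∀ x y : ℕ, x < y → x % (k - 1) = y % (k - 1) → (k - 1) ∣ (y - x) := by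
    intro x y hxy hmod
    exact (Nat.modEq_iff_dvd' (le_of_lt hxy)).mp hmod
  obtain ⟨hab, hcase⟩ := h
  rcases hcase with h1 | h2 | h3 | h4
  · -- b - a ≤ k - 2
    by_cases ha0 : a = 0 ∨ a = n
    · have ha : a = 0 := by omega
      have hb' : ¬(b = 0 ∨ b = n) := by omega
      rw [ocol, ocol, if_pos ha0, if_neg hb']
      have : b % (k - 1) = b := Nat.mod_eq_of_lt (by omega)
      omega
    · by_cases hbn : b = 0 ∨ b = n
      · rw [ocol, ocol, if_neg ha0, if_pos hbn]
        have : a % (k - 1) < k - 1 := Nat.mod_lt _ hk1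
        omega
      · rw [ocol, ocol, if_neg ha0, if_neg hbn]
        intro hmod
        have hd := key a b hab hmod
        have := Nat.le_of_dvd (by omega) hd
        omega
  · -- b = a + k
    by_cases ha0 : a = 0 ∨ a = n
    · have ha : a = 0 := by omega
      have hb' : ¬(b = 0 ∨ b = n) := by omega
      rw [ocol, ocol, if_pos ha0, if_neg hb']
      have hbk : b = k := by omega
      have : b % (k - 1) = 1 := by
        rw [hbk, Nat.mod_eq_sub_mod (by omega)]
        have : k - (k - 1) = 1 := by omega
        rw [this, Nat.mod_eq_of_lt (by omega)]
      omega
    · by_cases hbn : b = 0 ∨ b = n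
      · rw [ocol, ocol, if_neg ha0, if_pos hbn]
        have : a % (k - 1) < k - 1 := Nat.mod_lt _ hk1
        omega
      · rw [ocol, ocol, if_neg ha0, if_neg hbn]
        intro hmod
        have hd := key a b hab hmod
        have hd1 : (k - 1) ∣ (b - a - (k - 1)) := Nat.dvd_sub hd (dvd_refl _)
        have h1 : b - a - (k - 1) = 1 := by omega
        rw [h1] at hd1
        have := Nat.le_of_dvd one_pos hd1
        omega
  · -- a = 0, b = k - 1
    have ha0 : a = 0 ∨ a = n := Or.inl h3.1
    have hb' : ¬(b = 0 ∨ b = n) := by omega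
    rw [ocol, ocol, if_pos ha0, if_neg hb']
    rw [h3.2, Nat.mod_self]
    omega
  · -- a = n - k + 1, b = n
    have hbn : b = 0 ∨ b = n := Or.inr h4.2
    have ha0 : ¬(a = 0 ∨ a = n) := by omega
    rw [ocol, ocol, if_neg ha0, if_pos hbn]
    have : a % (k - 1) < k - 1 := Nat.mod_lt _ hk1
    omega

/-- For `n ≥ k ≥ d = 2m+1 ≥ 5`, the chromatic number of the graph of the
ordinary polytope `P^{d,k,n}` is `k` if `n > k`, and `k + 1` if `n = k`. -/
theorem ordinary_chromatic_number (d k n m : ℕ) (hdm : d = 2 * m + 1)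
    (hd5 : 5 ≤ d) (hdk : d ≤ k) (hkn : k ≤ n) :
    (ordinaryGraph k n).chromaticNumber =
      if k < n then (k : ℕ∞) else (k : ℕ∞) + 1 := by
  have hk5 : 5 ≤ k := le_trans hd5 hdk
  rcases lt_or_eq_of_le hkn with hlt | heq
  · rw [if_pos hlt]
    -- upper bound
    have hcol : (ordinaryGraph k n).Colorable k := by
      refine ⟨⟨fun i => ⟨ocol k n i.val, ocol_lt k n i.val hk5⟩, ?_⟩⟩
      intro a b hadj hfe
      have hv : ocol k n a.val = ocol k n b.val := congrArg Fin.val hfe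
      rcases hadj with h | h
      · exact ocol_ne k n a.val b.val hk5 hlt (Nat.le_of_lt_succ b.isLt) h hv
      · exact ocol_ne k n b.val a.val hk5 hlt (Nat.le_of_lt_succ a.isLt) h hv.symm
    -- lower bound: clique {0,...,k-1}
    have hkle : k ≤ n + 1 := by omega
    set s : Finset (Fin (n + 1)) :=
      (Finset.univ : Finset (Fin k)).map (Fin.castLEEmb hkle) with hs
    have hcard : s.card = k := by simp [hs]
    have hclique : (ordinaryGraph k n).IsClique (s : Set (Fin (n + 1))) := by
      intro x hx y hy hxy
      simp only [hs, Finset.coe_map, Set.mem_image, Finset.mem_coe, Finset.mem_univ] at hx hy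
      obtain ⟨i, -, rfl⟩ := hx
      obtain ⟨j, -, rfl⟩ := hy
      have hi : (Fin.castLEEmb hkle i : Fin (n+1)).val = i.val := rfl
      have hj : (Fin.castLEEmb hkle j : Fin (n+1)).val = j.val := rfl
      have hij : i.val ≠ j.val := fun h => hxy (by
        apply congrArg; exact Fin.ext h)
      have hik := i.isLt
      have hjk := j.isLt
      rcases Nat.lt_or_ge i.val j.val with h | h
      · exact Or.inl ⟨by rw [hi, hj]; exact h, by rw [hi, hj]; omega⟩
      · exact Or.inr ⟨by rw [hi, hj]; omega, by rw [hi, hj]; omega⟩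
    have hlow := hclique.card_le_chromaticNumber
    rw [hcard] at hlow
    exact le_antisymm hcol.chromaticNumber_le hlow
  · rw [if_neg (by omega)]
    subst heq
    -- graph is complete
    have hcol : (ordinaryGraph k k).Colorable (k + 1) := by
      refine ⟨⟨fun i => i, ?_⟩⟩
      intro a b hadj
      exact fun h => (ordinaryGraph k k).ne_of_adj hadj h
    have hclique : (ordinaryGraph k k).IsClique (Set.univ : Set (Fin (k + 1))) := by
      intro x _ y _ hxy
      have hv : x.val ≠ y.val := fun h => hxy (Fin.ext h)
      have hx := x.isLt
      have hy := y.isLt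
      rcases Nat.lt_or_ge x.val y.val with h | h
      · exact Or.inl ⟨h, by omega⟩
      · exact Or.inr ⟨by omega, by omega⟩
    have hclique' : (ordinaryGraph k k).IsClique ((Finset.univ : Finset (Fin (k+1))) : Set (Fin (k+1))) := by
      simpa using hclique
    have hlow := hclique'.card_le_chromaticNumber
    have hcard : (Finset.univ : Finset (Fin (k+1))).card = k + 1 := by simp
    rw [hcard] at hlow
    have := le_antisymm hcol.chromaticNumber_le hlow
    rw [this]
    push_cast
    ring
end
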